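/- If the structured 6×6 Hermitian matrix P(a,b,c,a',b',c',d,e,f,g) is positive semidefinite, then a² + b² + c² ≤ 1, a'² + b'² + c'² ≤ 1, and d ∈ [-1, 1]. -/

import Mathlib

open Matrix Complex
open scoped ComplexOrder

def M (a b c : ℝ) : Matrix (Fin 2) (Fin 2) ℂ :=
  !![-(c:ℂ) * I, -(b:ℂ) - (a:ℂ) * I;
     (b:ℂ) - (a:ℂ) * I, (c:ℂ) * I]

def N (d e f g : ℝ) : Matrix (Fin 2) (Fin 2) ℂ :=
  !![(d:ℂ) + (g:ℂ) * I, (f:ℂ) + (e:ℂ) * I;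
     -(f:ℂ) + (e:ℂ) * I, (d:ℂ) - (g:ℂ) * I]

def blk (a b c a' b' c' d e f g : ℝ) : Fin 3 → Fin 3 → Matrix (Fin 2) (Fin 2) ℂ :=
  ![![1, (M a b c)ᴴ, (M a' b' c')ᴴ],
    ![M a b c, 1, (N d e f g)ᴴ],
    ![M a' b' c', N d e f g, 1]]

def P (a b c a' b' c' d e f g : ℝ) : Matrix (Fin 3 × Fin 2) (Fin 3 × Fin 2) ℂ :=
  fun p q => blk a b c a' b' c' d e f g p.1 q.1 p.2 q.2

def A (a b c a' b' c' : ℝ) : Matrix (Fin 3 × Fin 2) (Fin 2) ℂ :=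
  fun p l => (![1, M a b c, M a' b' c'] p.1) p.2 l

set_option maxHeartbeats 1000000 in
theorem P_psd_necessary_bounds (a b c a' b' c' d e f g : ℝ)
    (hP : (P a b c a' b' c' d e f g).PosSemidef) :
    a ^ 2 + b ^ 2 + c ^ 2 ≤ 1 ∧ a' ^ 2 + b' ^ 2 + c' ^ 2 ≤ 1 ∧ d ∈ Set.Icc (-1 : ℝ) 1 := by
  have key : ∀ v : Fin 3 → Fin 2 → ℂ,
      (0:ℂ) ≤ star (fun p : Fin 3 × Fin 2 => v p.1 p.2) ⬝ᵥ
        (P a b c a' b' c' d e f g *ᵥ fun p : Fin 3 × Fin 2 => v p.1 p.2) :=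
    fun v => hP.dotProduct_mulVec_nonneg _
  have h1 := key ![![1, 0], ![(c:ℂ)*I, -(b:ℂ)+(a:ℂ)*I], ![0,0]]
  have h2 := key ![![1, 0], ![0,0], ![(c':ℂ)*I, -(b':ℂ)+(a':ℂ)*I]]
  have h3 := key ![![0, 0], ![1,0], ![1,0]]
  have h4 := key ![![0, 0], ![1,0], ![-1,0]]
  simp only [dotProduct, Matrix.mulVec, Fintype.sum_prod_type, Fin.sum_univ_three,
    Fin.sum_univ_two, P, blk, M, N, Matrix.conjTranspose_apply, Matrix.one_apply,
    Matrix.cons_val', Matrix.cons_val_zero, Matrix.cons_val_one, Matrix.cons_val_two, Matrix.head_cons,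
    Matrix.head_fin_const, Matrix.empty_val', Matrix.cons_val_fin_one, Pi.star_apply,
    Matrix.of_apply] at h1 h2 h3 h4
  norm_num [Complex.le_def, Complex.ext_iff, Matrix.vecHead, Matrix.vecTail] at h1 h2 h3 h4
  refine ⟨by nlinarith [h1], by nlinarith [h2], ⟨by nlinarith [h3, h4], by nlinarith [h3, h4]⟩⟩
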